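/- When a single p-simplex σ is inserted at time t and creates a new p-homology class, the harmonic chain space satisfies: Har_p(K_{t^-}) is mapped injectively into C_p(K_t) and dim Har_p(K_t) = dim Har_p(K_{t^-}) + 1; in general dim Har_p(K_t) − dim Har_p(K_{t^-}) ∈ {0, 1} when adding a single p-simplex. -/

import Mathlib

open Matrix
open scoped Classical

namespace Harmonic

/-- A chain `x` is supported on the set `S` of simplices. -/
def SupportedOn {ι : Type*} (S : Set ι) (x : ι → ℝ) : Prop := ∀ i ∉ S, x i = 0

/-- The submodule of vectors vanishing on `S`. -/
noncomputable def vanishSub {ι : Type*} (S : Set ι) : Submodule ℝ (ι → ℝ) :=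
  ⨅ i ∈ S, LinearMap.ker (LinearMap.proj (R := ℝ) (φ := fun _ : ι => ℝ) i)

/-- The submodule of vectors supported on `S`. -/
noncomputable def suppSub {ι : Type*} (S : Set ι) : Submodule ℝ (ι → ℝ) := vanishSub Sᶜ

/-- A sequence of independent cycles in a subspace `A`: each term lies outside the
linear span of its predecessors. -/
def IndepIn {b n : ℕ} (A : Submodule ℝ (Fin b → ℝ)) (zs : Fin n → (Fin b → ℝ)) : Prop :=
  (∀ i, zs i ∈ A) ∧ ∀ i : Fin n, zs i ∉ Submodule.span ℝ (zs '' {j | j < i})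

/-- A filtered simplicial chain complex in three consecutive dimensions `p-1, p, p+1`:
boundary matrices `D₁ = ∂_p`, `D₂ = ∂_{p+1}` with `∂∂ = 0`, and for each time `t ∈ ℝ`
the sets of simplices present at time `t`, monotone in `t` and closed under faces. -/
structure FilteredComplex (a b c : ℕ) where
  D₁ : Matrix (Fin a) (Fin b) ℝ
  D₂ : Matrix (Fin b) (Fin c) ℝ
  dd : D₁ * D₂ = 0
  Sm : ℝ → Set (Fin a)
  S0 : ℝ → Set (Fin b)
  Sp : ℝ → Set (Fin c)
  monoSm : Monotone Sm
  monoS0 : Monotone S0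
  monoSp : Monotone Sp
  closed1 : ∀ t i j, j ∈ S0 t → D₁ i j ≠ 0 → i ∈ Sm t
  closed2 : ∀ t i j, j ∈ Sp t → D₂ i j ≠ 0 → i ∈ S0 t

namespace FilteredComplex

variable {a b c : ℕ} (F : FilteredComplex a b c)

/-- `x` is a `p`-cycle of the subcomplex `K_t`. -/
def IsCycleAt (t : ℝ) (x : Fin b → ℝ) : Prop :=
  SupportedOn (F.S0 t) x ∧ F.D₁.mulVec x = 0

/-- `x` is a `p`-boundary in the subcomplex `K_t`. -/
def IsBoundaryAt (t : ℝ) (x : Fin b → ℝ) : Prop :=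
  ∃ y : Fin c → ℝ, SupportedOn (F.Sp t) y ∧ F.D₂.mulVec y = x

/-- `x` is a `p`-cocycle of the subcomplex `K_t`: its coboundary, computed in `K_t`,
vanishes. -/
def IsCocycleAt (t : ℝ) (x : Fin b → ℝ) : Prop :=
  ∀ j ∈ F.Sp t, F.D₂.transpose.mulVec x j = 0

/-- `x` is a nontrivial harmonic cycle of `K_t`. -/
def IsHarmonicAt (t : ℝ) (x : Fin b → ℝ) : Prop :=
  F.IsCycleAt t x ∧ F.IsCocycleAt t x ∧ ¬ F.IsBoundaryAt t x

/-- The harmonic span of a cycle: the set of times at which it is a nontrivial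
harmonic cycle. -/
def hspan (x : Fin b → ℝ) : Set ℝ := {t | F.IsHarmonicAt t x}

/-- The length of the harmonic span of a cycle (`∞` if the cycle stays harmonic
forever, `0` if it is never harmonic). -/
noncomputable def spanLen (x : Fin b → ℝ) : ENNReal :=
  if F.hspan x = ∅ then 0
  else if BddAbove (F.hspan x) then ENNReal.ofReal (sSup (F.hspan x) - sInf (F.hspan x))
  else ⊤

/-- The sequence of span lengths of a sequence of cycles. -/
noncomputable def lenSeq {n : ℕ} (zs : Fin n → (Fin b → ℝ)) : Fin n → ENNReal :=
  fun i => F.spanLen (zs i)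

/-- The space of `p`-cycles of `K_t`. -/
noncomputable def Zsub (t : ℝ) : Submodule ℝ (Fin b → ℝ) :=
  suppSub (F.S0 t) ⊓ LinearMap.ker F.D₁.mulVecLin

/-- The space of `p`-boundaries of `K_t`. -/
noncomputable def Bsub (t : ℝ) : Submodule ℝ (Fin b → ℝ) :=
  Submodule.map F.D₂.mulVecLin (suppSub (F.Sp t))

/-- The space of harmonic `p`-cycles of `K_t`. -/
noncomputable def harSub (t : ℝ) : Submodule ℝ (Fin b → ℝ) :=
  F.Zsub t ⊓ Submodule.comap F.D₂.transpose.mulVecLin (vanishSub (F.Sp t))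

/-- The space of `p`-cycles of the final complex `K`. -/
def ZK : Submodule ℝ (Fin b → ℝ) := LinearMap.ker F.D₁.mulVecLin

end FilteredComplex

/-- An `ε`-chain-interleaving between two filtered complexes: families of chain maps
`φ_t : C(K_t) → C(K'_{t+ε})` and `ψ_t : C(K'_t) → C(K_{t+ε})` commuting with the
boundary operators and the filtration inclusions, whose composites are the
`2ε`-shift (inclusion) maps. -/
structure ChainInterleaving {a b c a' b' c' : ℕ}
    (F : FilteredComplex a b c) (G : FilteredComplex a' b' c') (ε : ℝ) where
  φm : ℝ → (Fin a → ℝ) →ₗ[ℝ] (Fin a' → ℝ)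
  φ0 : ℝ → (Fin b → ℝ) →ₗ[ℝ] (Fin b' → ℝ)
  φp : ℝ → (Fin c → ℝ) →ₗ[ℝ] (Fin c' → ℝ)
  ψm : ℝ → (Fin a' → ℝ) →ₗ[ℝ] (Fin a → ℝ)
  ψ0 : ℝ → (Fin b' → ℝ) →ₗ[ℝ] (Fin b → ℝ)
  ψp : ℝ → (Fin c' → ℝ) →ₗ[ℝ] (Fin c → ℝ)
  φm_supp : ∀ t x, SupportedOn (F.Sm t) x → SupportedOn (G.Sm (t + ε)) (φm t x)
  φ0_supp : ∀ t x, SupportedOn (F.S0 t) x → SupportedOn (G.S0 (t + ε)) (φ0 t x)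
  φp_supp : ∀ t x, SupportedOn (F.Sp t) x → SupportedOn (G.Sp (t + ε)) (φp t x)
  ψm_supp : ∀ t x, SupportedOn (G.Sm t) x → SupportedOn (F.Sm (t + ε)) (ψm t x)
  ψ0_supp : ∀ t x, SupportedOn (G.S0 t) x → SupportedOn (F.S0 (t + ε)) (ψ0 t x)
  ψp_supp : ∀ t x, SupportedOn (G.Sp t) x → SupportedOn (F.Sp (t + ε)) (ψp t x)
  φ_chain₁ : ∀ t, (φm t).comp F.D₁.mulVecLin = G.D₁.mulVecLin.comp (φ0 t)
  φ_chain₂ : ∀ t, (φ0 t).comp F.D₂.mulVecLin = G.D₂.mulVecLin.comp (φp t)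
  ψ_chain₁ : ∀ t, (ψm t).comp G.D₁.mulVecLin = F.D₁.mulVecLin.comp (ψ0 t)
  ψ_chain₂ : ∀ t, (ψ0 t).comp G.D₂.mulVecLin = F.D₂.mulVecLin.comp (ψp t)
  φ_nat : ∀ s t, s ≤ t → ∀ x, SupportedOn (F.S0 s) x → φ0 t x = φ0 s x
  ψ_nat : ∀ s t, s ≤ t → ∀ x, SupportedOn (G.S0 s) x → ψ0 t x = ψ0 s x
  comp₁ : ∀ t x, SupportedOn (F.S0 t) x → ψ0 (t + ε) (φ0 t x) = x
  comp₂ : ∀ t x, SupportedOn (G.S0 t) x → φ0 (t + ε) (ψ0 t x) = x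

/-- A harmonic-preserving `ε`-chain-interleaving: additionally, any cycle which is
still a cocycle `ρ ≥ ε` time later is sent to a cocycle. -/
structure HarmonicInterleaving {a b c a' b' c' : ℕ}
    (F : FilteredComplex a b c) (G : FilteredComplex a' b' c') (ε : ℝ)
    extends ChainInterleaving F G ε where
  φ_harm : ∀ t ρ x, ε ≤ ρ → F.IsCycleAt t x → F.IsCocycleAt (t + ρ) x →
    G.IsCocycleAt (t + ε) (φ0 t x)
  ψ_harm : ∀ t ρ x, ε ≤ ρ → G.IsCycleAt t x → G.IsCocycleAt (t + ρ) x →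
    F.IsCocycleAt (t + ε) (ψ0 t x)

/-- The chain interleaving distance. -/
noncomputable def dCI {a b c a' b' c' : ℕ}
    (F : FilteredComplex a b c) (G : FilteredComplex a' b' c') : ℝ :=
  sInf {ε | 0 ≤ ε ∧ Nonempty (ChainInterleaving F G ε)}

/-- The harmonic interleaving distance. -/
noncomputable def dHI {a b c a' b' c' : ℕ}
    (F : FilteredComplex a b c) (G : FilteredComplex a' b' c') : ℝ :=
  sInf {ε | 0 ≤ ε ∧ Nonempty (HarmonicInterleaving F G ε)}

/-- An `ε`-interleaving of the homology persistence modules, encoded via chain-level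
lifts: maps sending cycles to cycles and boundaries to boundaries, commuting with
the filtration maps up to boundaries, and composing to the shift maps up to
boundaries. -/
def HomInterleaved {a b c a' b' c' : ℕ}
    (F : FilteredComplex a b c) (G : FilteredComplex a' b' c') (ε : ℝ) : Prop :=
  ∃ (u : ℝ → (Fin b → ℝ) →ₗ[ℝ] (Fin b' → ℝ)) (v : ℝ → (Fin b' → ℝ) →ₗ[ℝ] (Fin b → ℝ)),
    (∀ t, Submodule.map (u t) (F.Zsub t) ≤ G.Zsub (t + ε)) ∧
    (∀ t, Submodule.map (u t) (F.Bsub t ⊓ F.Zsub t) ≤ G.Bsub (t + ε)) ∧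
    (∀ t, Submodule.map (v t) (G.Zsub t) ≤ F.Zsub (t + ε)) ∧
    (∀ t, Submodule.map (v t) (G.Bsub t ⊓ G.Zsub t) ≤ F.Bsub (t + ε)) ∧
    (∀ s t, s ≤ t → ∀ x ∈ F.Zsub s, u t x - u s x ∈ G.Bsub (t + ε)) ∧
    (∀ s t, s ≤ t → ∀ x ∈ G.Zsub s, v t x - v s x ∈ F.Bsub (t + ε)) ∧
    (∀ t, ∀ x ∈ F.Zsub t, v (t + ε) (u t x) - x ∈ F.Bsub (t + 2 * ε)) ∧
    (∀ t, ∀ x ∈ G.Zsub t, u (t + ε) (v t x) - x ∈ G.Bsub (t + 2 * ε))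

/-- The homology-level interleaving distance. -/
noncomputable def dI {a b c a' b' c' : ℕ}
    (F : FilteredComplex a b c) (G : FilteredComplex a' b' c') : ℝ :=
  sInf {ε | 0 ≤ ε ∧ HomInterleaved F G ε}


open scoped RealInnerProductSpace

lemma mem_vanishSub {ι : Type*} {S : Set ι} {x : ι → ℝ} :
    x ∈ vanishSub S ↔ ∀ i ∈ S, x i = 0 := by
  simp [vanishSub, Submodule.mem_iInf]

lemma mem_suppSub {ι : Type*} {S : Set ι} {x : ι → ℝ} :
    x ∈ suppSub S ↔ SupportedOn S x := by
  simp [suppSub, mem_vanishSub, SupportedOn]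

lemma vanishSub_anti {ι : Type*} {S T : Set ι} (h : S ⊆ T) : vanishSub T ≤ vanishSub S := by
  intro x hx
  rw [mem_vanishSub] at *
  exact fun i hi => hx i (h hi)

lemma finrank_le_inf_ker_add_one {n : ℕ} (W : Submodule ℝ (Fin n → ℝ))
    (f : (Fin n → ℝ) →ₗ[ℝ] ℝ) :
    Module.finrank ℝ W ≤ Module.finrank ℝ (W ⊓ LinearMap.ker f : Submodule ℝ _) + 1 := by
  set g := f.comp W.subtype with hg
  have h1 : Module.finrank ℝ (LinearMap.range g) + Module.finrank ℝ (LinearMap.ker g)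
      = Module.finrank ℝ W := g.finrank_range_add_finrank_ker
  have h2 : Submodule.map W.subtype (LinearMap.ker g) = W ⊓ LinearMap.ker f := by
    ext x
    simp only [Submodule.mem_map, LinearMap.mem_ker, Submodule.mem_inf, hg,
      LinearMap.comp_apply]
    constructor
    · rintro ⟨⟨y, hy⟩, h, rfl⟩; exact ⟨hy, h⟩
    · rintro ⟨hx, h⟩; exact ⟨⟨x, hx⟩, h, rfl⟩
  have h3 : Module.finrank ℝ (LinearMap.range g) ≤ 1 := by
    simpa using (LinearMap.range g).finrank_le
  rw [← h2, Submodule.finrank_map_subtype_eq]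
  omega

/-- Boundaries are cycles. -/
lemma FilteredComplex.Bsub_le_Zsub {a b c : ℕ} (F : FilteredComplex a b c) (s : ℝ) :
    F.Bsub s ≤ F.Zsub s := by
  intro x hx
  rw [FilteredComplex.Bsub, Submodule.mem_map] at hx
  obtain ⟨y, hy, rfl⟩ := hx
  rw [mem_suppSub] at hy
  rw [FilteredComplex.Zsub, Submodule.mem_inf]
  constructor
  · rw [mem_suppSub]
    intro i hi
    simp only [Matrix.mulVecLin_apply, Matrix.mulVec, dotProduct]
    apply Finset.sum_eq_zero
    intro j _
    by_cases hj : j ∈ F.Sp s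
    · by_cases hD : F.D₂ i j = 0
      · rw [hD, zero_mul]
      · exact absurd (F.closed2 s i j hj hD) hi
    · rw [hy j hj, mul_zero]
  · rw [LinearMap.mem_ker]
    simp [Matrix.mulVecLin_apply, Matrix.mulVec_mulVec, F.dd]

/-- The sum identity `⟨D₂ y, x⟩ = ⟨y, D₂ᵀ x⟩`. -/
lemma adj_sum {b c : ℕ} (D₂ : Matrix (Fin b) (Fin c) ℝ) (x : Fin b → ℝ) (y : Fin c → ℝ) :
    ∑ i, (D₂ *ᵥ y) i * x i = ∑ j, y j * ((D₂ᵀ *ᵥ x) j) := by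
  simp only [Matrix.mulVec, dotProduct, Matrix.transpose_apply, Finset.sum_mul,
    Finset.mul_sum]
  rw [Finset.sum_comm]
  exact Finset.sum_congr rfl fun j _ => Finset.sum_congr rfl fun i _ => by ring

lemma FilteredComplex.finrank_B_add_har {a b c : ℕ} (F : FilteredComplex a b c) (s : ℝ) :
    Module.finrank ℝ (F.Bsub s) + Module.finrank ℝ (F.harSub s)
      = Module.finrank ℝ (F.Zsub s) := by
  let e : EuclideanSpace ℝ (Fin b) ≃ₗ[ℝ] (Fin b → ℝ) := WithLp.linearEquiv 2 ℝ (Fin b → ℝ)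
  let B : Submodule ℝ (EuclideanSpace ℝ (Fin b)) := (F.Bsub s).comap (e : _ →ₗ[ℝ] _)
  let Z : Submodule ℝ (EuclideanSpace ℝ (Fin b)) := (F.Zsub s).comap (e : _ →ₗ[ℝ] _)
  let H : Submodule ℝ (EuclideanSpace ℝ (Fin b)) := (F.harSub s).comap (e : _ →ₗ[ℝ] _)
  have hBZ : B ≤ Z := Submodule.comap_mono (F.Bsub_le_Zsub s)
  have hinner : ∀ u x : EuclideanSpace ℝ (Fin b), ⟪u, x⟫ = ∑ i, u i * x i := by
    intro u x
    simp [PiLp.inner_apply, RCLike.inner_apply, conj_trivial, mul_comm]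
  have hH : H = Bᗮ ⊓ Z := by
    ext x
    show x.ofLp ∈ F.harSub s ↔ _
    rw [FilteredComplex.harSub, Submodule.mem_inf, Submodule.mem_inf,
      Submodule.mem_comap, mem_vanishSub]
    rw [and_comm]
    apply and_congr_left
    intro hz
    rw [Submodule.mem_orthogonal]
    constructor
    · intro hc u hu
      have hu' : u.ofLp ∈ F.Bsub s := hu
      rw [FilteredComplex.Bsub, Submodule.mem_map] at hu'
      obtain ⟨y, hy, huy⟩ := hu'
      rw [mem_suppSub] at hy
      rw [hinner]
      have hplain : ∑ i, (F.D₂ *ᵥ y) i * x i = 0 := by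
        rw [adj_sum]
        apply Finset.sum_eq_zero
        intro j _
        by_cases hj : j ∈ F.Sp s
        · have h2 : (F.D₂ᵀ *ᵥ x) j = 0 := hc j hj
          rw [h2, mul_zero]
        · rw [hy j hj, zero_mul]
      calc (∑ i, u i * x i) = ∑ i, (F.D₂ *ᵥ y) i * x i := by
              refine Finset.sum_congr rfl fun i _ => ?_
              have : u i = (F.D₂ *ᵥ y) i := by rw [← huy]; rfl
              rw [this]
        _ = 0 := hplain
    · intro ho j hj
      have hy : (Pi.single j 1 : Fin c → ℝ) ∈ suppSub (F.Sp s) := by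
        rw [mem_suppSub]
        intro i hi
        rw [Pi.single_apply, if_neg]
        rintro rfl
        exact hi hj
      have hu : (F.D₂ *ᵥ Pi.single j 1 : Fin b → ℝ) ∈ F.Bsub s :=
        ⟨Pi.single j 1, hy, rfl⟩
      have h0 := ho (WithLp.toLp 2 _) hu
      rw [hinner] at h0
      have h0' : ∑ i, (F.D₂ *ᵥ (Pi.single j 1 : Fin c → ℝ)) i * x i = 0 := h0
      rw [adj_sum F.D₂ x.ofLp (Pi.single j 1)] at h0'
      rw [show ∑ j', (Pi.single j 1 : Fin c → ℝ) j' * (F.D₂ᵀ *ᵥ x) j'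
          = (F.D₂ᵀ *ᵥ x) j from by simp [Pi.single_apply, Finset.sum_ite_eq']] at h0'
      exact h0'
  have hmain := Submodule.finrank_add_inf_finrank_orthogonal (K₁ := B) (K₂ := Z) hBZ
  rw [← hH] at hmain
  have hf : ∀ p : Submodule ℝ (Fin b → ℝ),
      Module.finrank ℝ (p.comap (e : EuclideanSpace ℝ (Fin b) →ₗ[ℝ] (Fin b → ℝ))) =
        Module.finrank ℝ p := fun p => by
    rw [Submodule.comap_equiv_eq_map_symm]; exact LinearEquiv.finrank_map_eq _ _
  have h1 : Module.finrank ℝ B = Module.finrank ℝ (F.Bsub s) := hf _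
  have h2 : Module.finrank ℝ H = Module.finrank ℝ (F.harSub s) := hf _
  have h3 : Module.finrank ℝ Z = Module.finrank ℝ (F.Zsub s) := hf _
  omega

/-- When a single `p`-simplex `σ` is inserted at time `t'`, the harmonic chain space
`Har_p(K_t)` is mapped injectively (included) into the chains at `t'`, the dimension of
the harmonic space changes by `0` or `1`, and if a new `p`-homology class is created
(the Betti number `dim Z - dim B` increases by one) then the dimension of the
harmonic space increases by exactly one. -/
theorem add_simplex_harmonic_rank {a b c : ℕ} (F : FilteredComplex a b c)
    (t t' : ℝ) (htt : t ≤ t') (σ : Fin b) (hσ : σ ∉ F.S0 t)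
    (hS0 : F.S0 t' = insert σ (F.S0 t)) (hSm : F.Sm t' = F.Sm t) (hSp : F.Sp t' = F.Sp t) :
    F.harSub t ≤ F.harSub t' ∧
    (Module.finrank ℝ (F.harSub t') = Module.finrank ℝ (F.harSub t) ∨
      Module.finrank ℝ (F.harSub t') = Module.finrank ℝ (F.harSub t) + 1) ∧
    (Module.finrank ℝ (F.Zsub t') - Module.finrank ℝ (F.Bsub t') =
        (Module.finrank ℝ (F.Zsub t) - Module.finrank ℝ (F.Bsub t)) + 1 →
      Module.finrank ℝ (F.harSub t') = Module.finrank ℝ (F.harSub t) + 1) := by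
  have hsupp_le : suppSub (F.S0 t) ≤ suppSub (F.S0 t') :=
    vanishSub_anti (Set.compl_subset_compl.mpr (F.monoS0 htt))
  have hZle : F.Zsub t ≤ F.Zsub t' := by
    rw [FilteredComplex.Zsub, FilteredComplex.Zsub]
    exact inf_le_inf_right _ hsupp_le
  have hHle : F.harSub t ≤ F.harSub t' := by
    rw [FilteredComplex.harSub, FilteredComplex.harSub, hSp]
    exact inf_le_inf_right _ hZle
  -- Z t = Z t' ⊓ ker (proj σ)
  have hZeq : F.Zsub t = F.Zsub t' ⊓
      LinearMap.ker (LinearMap.proj (R := ℝ) (φ := fun _ : Fin b => ℝ) σ) := by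
    ext x
    rw [Submodule.mem_inf, FilteredComplex.Zsub, FilteredComplex.Zsub,
      Submodule.mem_inf, Submodule.mem_inf, mem_suppSub, mem_suppSub, LinearMap.mem_ker]
    constructor
    · rintro ⟨hs, hk⟩
      refine ⟨⟨?_, hk⟩, hs σ hσ⟩
      intro i hi
      apply hs
      rw [hS0] at hi
      exact fun h => hi (Set.mem_insert_of_mem _ h)
    · rintro ⟨⟨hs, hk⟩, h0⟩
      refine ⟨?_, hk⟩
      intro i hi
      by_cases hiσ : i = σ
      · subst hiσ; exact h0
      · apply hs
        rw [hS0]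
        rintro (h | h)
        · exact hiσ h
        · exact hi h
  have hB' : F.Bsub t' = F.Bsub t := by
    rw [FilteredComplex.Bsub, FilteredComplex.Bsub, hSp]
  have key1 := F.finrank_B_add_har t
  have key2 := F.finrank_B_add_har t'
  have hZmono : Module.finrank ℝ (F.Zsub t) ≤ Module.finrank ℝ (F.Zsub t') :=
    Submodule.finrank_mono hZle
  have hZup : Module.finrank ℝ (F.Zsub t') ≤ Module.finrank ℝ (F.Zsub t) + 1 := by
    rw [hZeq]
    exact finrank_le_inf_ker_add_one _ _
  refine ⟨hHle, ?_, ?_⟩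
  · rw [hB'] at key2
    omega
  · intro hyp
    rw [hB'] at key2 hyp
    have hBleZ : Module.finrank ℝ (F.Bsub t) ≤ Module.finrank ℝ (F.Zsub t) := by omega
    omega


end Harmonic
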